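/- Let C₁, …, Cₙ be unit circles in ℝ² with centres O₁, …, Oₙ, all passing through a common point O. Then for every real λ with 0 < λ ≤ 2 there exist points P₁ ∈ C₁, …, Pₙ ∈ Cₙ and an isometry f of ℝ² such that f(λ·Oⱼ) = Pⱼ for every j; that is, (P₁, …, Pₙ) is a congruent copy of the λ-scaled tuple (λ·O₁, …, λ·Oₙ). -/

import Mathlib

/-- Given unit circles `C₁, …, Cₙ` with centres `O₁, …, Oₙ` all
passing through a common point `O`, for every `0 < λ ≤ 2` there are points
`Pⱼ ∈ Cⱼ` and an isometry `f` of the plane with `f(λ·Oⱼ) = Pⱼ` for all `j`. -/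
theorem scaled_centres_on_circles (n : ℕ) (O : EuclideanSpace ℝ (Fin 2))
    (Oc : Fin n → EuclideanSpace ℝ (Fin 2))
    (hunit : ∀ j, dist O (Oc j) = 1)
    (lam : ℝ) (hlam0 : 0 < lam) (hlam2 : lam ≤ 2) :
    ∃ (P : Fin n → EuclideanSpace ℝ (Fin 2))
      (f : EuclideanSpace ℝ (Fin 2) ≃ᵢ EuclideanSpace ℝ (Fin 2)),
      (∀ j, dist (P j) (Oc j) = 1) ∧ ∀ j, f (lam • Oc j) = P j := by
  -- Work via the identification of the plane with ℂ.
  set e : ℂ ≃ₗᵢ[ℝ] EuclideanSpace ℝ (Fin 2) := Complex.orthonormalBasisOneI.repr with he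
  -- The rotation angle: cos α = lam / 2.
  have hle : (lam / 2) ^ 2 ≤ 1 := by nlinarith
  set b : ℝ := Real.sqrt (1 - (lam / 2) ^ 2) with hb
  have hb2 : b ^ 2 = 1 - (lam / 2) ^ 2 := Real.sq_sqrt (by nlinarith)
  set z : ℂ := ⟨lam / 2, b⟩ with hz
  have hznorm : ‖z‖ = 1 := by
    rw [Complex.norm_def, Complex.normSq_mk]
    rw [show lam / 2 * (lam / 2) + b * b = (lam/2)^2 + b^2 by ring, hb2]
    simp
  have hzc : z ∈ Metric.sphere (0 : ℂ) 1 := by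
    simpa [mem_sphere_zero_iff_norm] using hznorm
  set a : Circle := ⟨z, hzc⟩ with ha
  -- key computation: ‖lam • z - 1‖ = 1
  have hkey : ‖(lam : ℂ) * z - 1‖ = 1 := by
    have : ((lam : ℂ) * z - 1) = ⟨lam * (lam / 2) - 1, lam * b⟩ := by
      apply Complex.ext <;> simp [hz]
    rw [this, Complex.norm_def, Complex.normSq_mk]
    have : (lam * (lam / 2) - 1) * (lam * (lam / 2) - 1) + lam * b * (lam * b)
        = 1 + lam ^ 2 * ((lam/2)^2 + b^2 - 1) := by ring
    rw [this, hb2]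
    simp
  -- the isometry: x ↦ O + e (z * e.symm (x - lam • O))
  refine ⟨fun j => e (z * e.symm (lam • Oc j - lam • O)) + O,
    ((IsometryEquiv.constVAdd (-(lam • O)) : EuclideanSpace ℝ (Fin 2) ≃ᵢ EuclideanSpace ℝ (Fin 2))).trans
      ((e.symm.toIsometryEquiv).trans
        (((rotation a).toIsometryEquiv).trans
          ((e.toIsometryEquiv).trans ((IsometryEquiv.constVAdd O : EuclideanSpace ℝ (Fin 2) ≃ᵢ EuclideanSpace ℝ (Fin 2)))))), ?_, ?_⟩
  · intro j
    have hOc : ‖e.symm (Oc j - O)‖ = 1 := by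
      rw [e.symm.norm_map]
      simpa [dist_eq_norm, norm_sub_rev] using hunit j
    have : e (z * e.symm (lam • Oc j - lam • O)) + O - Oc j
        = e (z * e.symm (lam • Oc j - lam • O)) - (Oc j - O) := by abel
    rw [dist_eq_norm, this]
    have h2 : (Oc j - O) = e (e.symm (Oc j - O)) := by simp
    rw [h2, ← map_sub, e.norm_map]
    have h3 : lam • Oc j - lam • O = lam • (Oc j - O) := by rw [smul_sub]
    rw [h3, map_smul]
    have h4 : z * (lam • e.symm (Oc j - O)) - e.symm (Oc j - O)
        = ((lam : ℂ) * z - 1) * e.symm (Oc j - O) := by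
      rw [Complex.real_smul]; ring
    rw [h4, norm_mul, hkey, hOc, one_mul]
  · intro j
    simp only [IsometryEquiv.trans_apply, IsometryEquiv.constVAdd_apply,
      LinearIsometryEquiv.coe_toIsometryEquiv, rotation_apply]
    rw [vadd_eq_add, vadd_eq_add, neg_add_eq_sub, add_comm]
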